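/- arXiv:2309.07802 — 4 statements merged into one kernel-verified Lean document; each statement's English description precedes it below -/
import Mathlib

section
/- Let E, F, G, e, f, g, a, b be real numbers with a, b > 0, E = a², G = b², and EG − F² > 0, and let θ_u, θ_v be angles with a·b·cos(θ_u − θ_v) = F. Define κ₁ = (G·e·sin²θ_v + E·g·sin²θ_u − 2f·a·b·sinθ_u·sinθ_v)/(EG − F²) and κ₂ = (G·e·cos²θ_v + E·g·cos²θ_u − 2f·a·b·cosθ_u·cosθ_v)/(EG − F²). Then κ₁ + κ₂ = (G·e + E·g − 2f·F)/(EG − F²); in particular the sum is independent of θ_u and θ_v. -/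
open Real

theorem stmt13 (E F G e f g a b θu θv : ℝ) (ha : 0 < a) (hb : 0 < b)
    (hE : E = a ^ 2) (hG : G = b ^ 2) (hpos : 0 < E * G - F ^ 2)
    (hF : a * b * Real.cos (θu - θv) = F) :
    (G * e * Real.sin θv ^ 2 + E * g * Real.sin θu ^ 2
        - 2 * f * a * b * Real.sin θu * Real.sin θv) / (E * G - F ^ 2)
      + (G * e * Real.cos θv ^ 2 + E * g * Real.cos θu ^ 2
        - 2 * f * a * b * Real.cos θu * Real.cos θv) / (E * G - F ^ 2)
      = (G * e + E * g - 2 * f * F) / (E * G - F ^ 2) := by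
  rw [← add_div]
  congr 1
  rw [← hF, Real.cos_sub]
  have hu := Real.sin_sq_add_cos_sq θu
  have hv := Real.sin_sq_add_cos_sq θv
  linear_combination G * e * hv + E * g * hu
end

section
/- Fix h > 0 and a point (x₀, y₀) ∈ ℝ². For (x,y) ≠ (x₀,y₀) define ρ⃗ = (x − x₀, y − y₀, 0), ρ = |ρ⃗|, r = √(ρ² + h²), ρ̂ = ρ⃗/ρ, ρ̃ = e_z × ρ̂, and the vector field f(x,y) = (ρ/(4π(r + h)))·ρ̃. Then the z-component of the curl of f equals the Laplace Green function: (∇ × f)·e_z = 1/(4πr). -/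
open Real

theorem stmt16 (h x0 y0 : ℝ) (hh : 0 < h) (x y : ℝ) (hxy : (x, y) ≠ (x0, y0)) :
    deriv (fun t : ℝ =>
        (t - x0) / (4 * π * (Real.sqrt ((t - x0) ^ 2 + (y - y0) ^ 2 + h ^ 2) + h))) x
      - deriv (fun t : ℝ =>
        (-(t - y0)) / (4 * π * (Real.sqrt ((x - x0) ^ 2 + (t - y0) ^ 2 + h ^ 2) + h))) y
    = 1 / (4 * π * Real.sqrt ((x - x0) ^ 2 + (y - y0) ^ 2 + h ^ 2)) := by
  have hπ : (0:ℝ) < π := Real.pi_pos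
  set a := x - x0 with ha
  set b := y - y0 with hb
  have hpos : (0:ℝ) < a ^ 2 + b ^ 2 + h ^ 2 := by positivity
  set r := Real.sqrt (a ^ 2 + b ^ 2 + h ^ 2) with hr
  have hrpos : 0 < r := Real.sqrt_pos.mpr hpos
  have hrsq : r ^ 2 = a ^ 2 + b ^ 2 + h ^ 2 := Real.sq_sqrt hpos.le
  have hrh : 0 < r + h := by linarith
  have hden : 4 * π * (r + h) ≠ 0 := by positivity
  -- first derivative
  have h1 : HasDerivAt (fun t : ℝ => (t - x0) ^ 2 + b ^ 2 + h ^ 2) (2 * a) x := by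
    have h0 : HasDerivAt (fun t : ℝ => t - x0) 1 x := (hasDerivAt_id x).sub_const x0
    have := ((h0.pow 2).add_const (b ^ 2)).add_const (h ^ 2)
    simpa [ha, mul_comm] using this
  have hs1 : HasDerivAt (fun t : ℝ => Real.sqrt ((t - x0) ^ 2 + b ^ 2 + h ^ 2))
      (2 * a / (2 * r)) x := h1.sqrt (by simpa [ha] using hpos.ne')
  have hd1 : HasDerivAt (fun t : ℝ =>
      (t - x0) / (4 * π * (Real.sqrt ((t - x0) ^ 2 + b ^ 2 + h ^ 2) + h)))
      ((1 * (4 * π * (r + h)) - a * (4 * π * (2 * a / (2 * r)))) / (4 * π * (r + h)) ^ 2) x := by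
    have hnum : HasDerivAt (fun t : ℝ => t - x0) 1 x := (hasDerivAt_id x).sub_const x0
    have hgd : HasDerivAt (fun t : ℝ => 4 * π * (Real.sqrt ((t - x0) ^ 2 + b ^ 2 + h ^ 2) + h))
        (4 * π * (2 * a / (2 * r))) x := (hs1.add_const h).const_mul (4 * π)
    exact hnum.div hgd hden
  -- second derivative
  have h2 : HasDerivAt (fun t : ℝ => a ^ 2 + (t - y0) ^ 2 + h ^ 2) (2 * b) y := by
    have h0 : HasDerivAt (fun t : ℝ => t - y0) 1 y := (hasDerivAt_id y).sub_const y0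
    have := (((h0.pow 2).const_add (a ^ 2)).add_const (h ^ 2))
    simpa [hb, mul_comm] using this
  have hs2 : HasDerivAt (fun t : ℝ => Real.sqrt (a ^ 2 + (t - y0) ^ 2 + h ^ 2))
      (2 * b / (2 * r)) y := h2.sqrt (by simpa [hb] using hpos.ne')
  have hd2 : HasDerivAt (fun t : ℝ =>
      (-(t - y0)) / (4 * π * (Real.sqrt (a ^ 2 + (t - y0) ^ 2 + h ^ 2) + h)))
      (((-1) * (4 * π * (r + h)) - (-b) * (4 * π * (2 * b / (2 * r)))) / (4 * π * (r + h)) ^ 2)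
      y := by
    have hnum : HasDerivAt (fun t : ℝ => -(t - y0)) (-1) y :=
      ((hasDerivAt_id y).sub_const y0).neg
    have hgd : HasDerivAt (fun t : ℝ => 4 * π * (Real.sqrt (a ^ 2 + (t - y0) ^ 2 + h ^ 2) + h))
        (4 * π * (2 * b / (2 * r))) y := (hs2.add_const h).const_mul (4 * π)
    exact hnum.div hgd hden
  rw [hd1.deriv, hd2.deriv]
  have hπne : π ≠ 0 := hπ.ne'
  field_simp
  linear_combination hrsq
end

section
/- Fix h > 0 and (x₀, y₀) ∈ ℝ². For (x,y) ≠ (x₀,y₀) define ρ⃗ = (x − x₀, y − y₀, 0), ρ = |ρ⃗|, r = √(ρ² + h²), ρ̂ = ρ⃗/ρ, ρ̃ = e_z × ρ̂, and f'(x,y) = (ρ/(4π r (r + h)))·ρ̃. Then (∇ × f')·e_z = h/(4π r³). -/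
open Real

lemma aux17 (h c z x : ℝ) (hh : 0 < h) (hc : 0 ≤ c) :
    deriv (fun t : ℝ => (t - z) / (4 * π * Real.sqrt ((t - z) ^ 2 + c + h ^ 2)
        * (Real.sqrt ((t - z) ^ 2 + c + h ^ 2) + h))) x
    = (Real.sqrt ((x - z) ^ 2 + c + h ^ 2) ^ 2 * (Real.sqrt ((x - z) ^ 2 + c + h ^ 2) + h)
        - (x - z) ^ 2 * (2 * Real.sqrt ((x - z) ^ 2 + c + h ^ 2) + h))
      / (4 * π * Real.sqrt ((x - z) ^ 2 + c + h ^ 2) ^ 3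
        * (Real.sqrt ((x - z) ^ 2 + c + h ^ 2) + h) ^ 2) := by
  set s := Real.sqrt ((x - z) ^ 2 + c + h ^ 2) with hs
  have hq : 0 < (x - z) ^ 2 + c + h ^ 2 := by positivity
  have hspos : 0 < s := Real.sqrt_pos.mpr hq
  have h1 : HasDerivAt (fun t : ℝ => (t - z) ^ 2 + c + h ^ 2) (2 * (x - z)) x := by
    have h0 : HasDerivAt (fun t : ℝ => (t - z) ^ 2) (2 * (x - z)) x := by
      simpa using ((hasDerivAt_id x).sub_const z).fun_pow 2
    simpa using (h0.add_const c).add_const (h ^ 2)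
  have h2 : HasDerivAt (fun t : ℝ => Real.sqrt ((t - z) ^ 2 + c + h ^ 2))
      (2 * (x - z) / (2 * s)) x := h1.sqrt hq.ne'
  have h3 : HasDerivAt (fun t : ℝ => 4 * π * Real.sqrt ((t - z) ^ 2 + c + h ^ 2)
      * (Real.sqrt ((t - z) ^ 2 + c + h ^ 2) + h))
      (4 * π * (2 * (x - z) / (2 * s)) * (s + h) + 4 * π * s * (2 * (x - z) / (2 * s))) x :=
    (h2.const_mul (4 * π)).mul (h2.add_const h)
  have hg : 0 < 4 * π * s * (s + h) :=
    mul_pos (mul_pos (mul_pos (by norm_num) Real.pi_pos) hspos) (by linarith)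
  have h4 : HasDerivAt (fun t : ℝ => (t - z) / (4 * π * Real.sqrt ((t - z) ^ 2 + c + h ^ 2)
      * (Real.sqrt ((t - z) ^ 2 + c + h ^ 2) + h)))
      ((1 * (4 * π * s * (s + h)) - (x - z) *
        (4 * π * (2 * (x - z) / (2 * s)) * (s + h) + 4 * π * s * (2 * (x - z) / (2 * s))))
        / (4 * π * s * (s + h)) ^ 2) x :=
    ((hasDerivAt_id x).sub_const z).div h3 hg.ne'
  rw [h4.deriv]
  have hpi := Real.pi_ne_zero
  field_simp
  ring

theorem stmt17 (h x0 y0 : ℝ) (hh : 0 < h) (x y : ℝ) (hxy : (x, y) ≠ (x0, y0)) :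
    deriv (fun t : ℝ =>
        (t - x0) / (4 * π * Real.sqrt ((t - x0) ^ 2 + (y - y0) ^ 2 + h ^ 2)
          * (Real.sqrt ((t - x0) ^ 2 + (y - y0) ^ 2 + h ^ 2) + h))) x
      - deriv (fun t : ℝ =>
        (-(t - y0)) / (4 * π * Real.sqrt ((x - x0) ^ 2 + (t - y0) ^ 2 + h ^ 2)
          * (Real.sqrt ((x - x0) ^ 2 + (t - y0) ^ 2 + h ^ 2) + h))) y
    = h / (4 * π * Real.sqrt ((x - x0) ^ 2 + (y - y0) ^ 2 + h ^ 2) ^ 3) := by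
  have e2 : (fun t : ℝ =>
        (-(t - y0)) / (4 * π * Real.sqrt ((x - x0) ^ 2 + (t - y0) ^ 2 + h ^ 2)
          * (Real.sqrt ((x - x0) ^ 2 + (t - y0) ^ 2 + h ^ 2) + h)))
      = (fun t : ℝ =>
        -((t - y0) / (4 * π * Real.sqrt ((t - y0) ^ 2 + (x - x0) ^ 2 + h ^ 2)
          * (Real.sqrt ((t - y0) ^ 2 + (x - x0) ^ 2 + h ^ 2) + h)))) := by
    funext t
    rw [neg_div]
    ring_nf
  rw [e2, deriv.fun_neg, aux17 h ((y - y0) ^ 2) x0 x hh (by positivity),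
    aux17 h ((x - x0) ^ 2) y0 y hh (by positivity)]
  have hr : Real.sqrt ((y - y0) ^ 2 + (x - x0) ^ 2 + h ^ 2)
      = Real.sqrt ((x - x0) ^ 2 + (y - y0) ^ 2 + h ^ 2) := by ring_nf
  rw [hr]
  set r := Real.sqrt ((x - x0) ^ 2 + (y - y0) ^ 2 + h ^ 2) with hrdef
  have hq : 0 < (x - x0) ^ 2 + (y - y0) ^ 2 + h ^ 2 := by positivity
  have hrpos : 0 < r := Real.sqrt_pos.mpr hq
  have hr2 : r ^ 2 = (x - x0) ^ 2 + (y - y0) ^ 2 + h ^ 2 := Real.sq_sqrt hq.le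
  have hpi := Real.pi_ne_zero
  have hrh : 0 < r + h := by linarith
  field_simp
  linear_combination (2 * r + h) * hr2
end

section
/- Fix a real wavenumber k ≠ 0, h > 0, and (x₀, y₀) ∈ ℝ². For (x,y) ≠ (x₀,y₀) define ρ⃗ = (x − x₀, y − y₀, 0), ρ = |ρ⃗|, r = √(ρ² + h²), ρ̂ = ρ⃗/ρ, ρ̃ = e_z × ρ̂, and the complex vector field f_H(x,y) = ((e^{ikr} − e^{ikh})/(4π i k ρ))·ρ̃. Then (∇ × f_H)·e_z = e^{ikr}/(4πr) − (e^{ikh}/(4π))·0, i.e. the z-component of the curl of f_H equals e^{ikr}/(4πr). -/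
open Real Complex

lemma aux18 (k h : ℝ) (hk : k ≠ 0) (hh : 0 < h) (q : ℝ → ℝ) (w : ℝ → ℂ)
    (u a' ρ2 : ℝ) (wa : ℂ)
    (hq : HasDerivAt q (2 * a') u) (hw : HasDerivAt w wa u)
    (hqu : q u = ρ2) (hρ : 0 < ρ2) :
    HasDerivAt (fun t : ℝ => w t *
        (Complex.exp (I * k * Real.sqrt (q t + h ^ 2)) - Complex.exp (I * k * h))
        / (4 * π * I * k * ((q t : ℝ) : ℂ)))
      (((wa * (Complex.exp (I * k * Real.sqrt (ρ2 + h ^ 2)) - Complex.exp (I * k * h))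
        + w u * (I * k * (a' / Real.sqrt (ρ2 + h ^ 2)) *
            Complex.exp (I * k * Real.sqrt (ρ2 + h ^ 2)))) * (4 * π * I * k * (ρ2 : ℂ))
        - w u * (Complex.exp (I * k * Real.sqrt (ρ2 + h ^ 2)) - Complex.exp (I * k * h))
            * (4 * π * I * k * ((2 * a' : ℝ) : ℂ)))
        / (4 * π * I * k * (ρ2 : ℂ)) ^ 2) u := by
  have hpos : 0 < q u + h ^ 2 := by nlinarith
  have hR : Real.sqrt (q u + h ^ 2) ≠ 0 := by positivity
  -- derivative of sqrt composed
  have hs : HasDerivAt (fun t => Real.sqrt (q t + h ^ 2))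
      (a' / Real.sqrt (q u + h ^ 2)) u := by
    have h1 : HasDerivAt (fun t => q t + h ^ 2) (2 * a') u := hq.add_const _
    have h2 := (Real.hasDerivAt_sqrt (ne_of_gt hpos)).comp u h1
    refine h2.congr_deriv ?_
    field_simp
  have hexp : HasDerivAt (fun t : ℝ => Complex.exp (I * k * Real.sqrt (q t + h ^ 2)))
      (I * k * (a' / Real.sqrt (q u + h ^ 2)) *
        Complex.exp (I * k * Real.sqrt (q u + h ^ 2))) u := by
    have h1 : HasDerivAt (fun t : ℝ => I * k * (Real.sqrt (q t + h ^ 2) : ℂ))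
        (I * k * ((a' / Real.sqrt (q u + h ^ 2) : ℝ) : ℂ)) u := hs.ofReal_comp.const_mul _
    have h2 := h1.cexp
    convert h2 using 1
    push_cast
    ring
  have hnum : HasDerivAt (fun t : ℝ => w t *
      (Complex.exp (I * k * Real.sqrt (q t + h ^ 2)) - Complex.exp (I * k * h)))
      (wa * (Complex.exp (I * k * Real.sqrt (q u + h ^ 2)) - Complex.exp (I * k * h))
        + w u * (I * k * (a' / Real.sqrt (q u + h ^ 2)) *
            Complex.exp (I * k * Real.sqrt (q u + h ^ 2)))) u :=
    hw.mul (hexp.sub_const _)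
  have hden : HasDerivAt (fun t : ℝ => 4 * π * I * k * ((q t : ℝ) : ℂ))
      (4 * π * I * k * ((2 * a' : ℝ) : ℂ)) u := hq.ofReal_comp.const_mul _
  have hd0 : 4 * (π : ℂ) * I * k * ((q u : ℝ) : ℂ) ≠ 0 := by
    rw [hqu]
    simp only [ne_eq, mul_eq_zero, not_or]
    refine ⟨⟨⟨⟨?_, ?_⟩, ?_⟩, ?_⟩, ?_⟩ <;>
      simp [Complex.ofReal_ne_zero, Real.pi_ne_zero, hk, ne_of_gt hρ, I_ne_zero]
  have := hnum.div hden hd0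
  rw [hqu] at this
  exact this

theorem stmt18 (k h x0 y0 : ℝ) (hk : k ≠ 0) (hh : 0 < h) (x y : ℝ)
    (hxy : (x, y) ≠ (x0, y0)) :
    deriv (fun t : ℝ =>
        ((t - x0) : ℂ) *
          (Complex.exp (I * k * Real.sqrt ((t - x0) ^ 2 + (y - y0) ^ 2 + h ^ 2))
            - Complex.exp (I * k * h))
          / (4 * π * I * k * (((t - x0) ^ 2 + (y - y0) ^ 2 : ℝ) : ℂ))) x
      - deriv (fun t : ℝ =>
        (-(t - y0) : ℂ) *
          (Complex.exp (I * k * Real.sqrt ((x - x0) ^ 2 + (t - y0) ^ 2 + h ^ 2))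
            - Complex.exp (I * k * h))
          / (4 * π * I * k * (((x - x0) ^ 2 + (t - y0) ^ 2 : ℝ) : ℂ))) y
    = Complex.exp (I * k * Real.sqrt ((x - x0) ^ 2 + (y - y0) ^ 2 + h ^ 2))
        / (4 * π * Real.sqrt ((x - x0) ^ 2 + (y - y0) ^ 2 + h ^ 2)) := by
  have hxy' : x ≠ x0 ∨ y ≠ y0 := by
    by_contra hc
    push_neg at hc
    exact hxy (by simp [hc.1, hc.2])
  set a := x - x0 with ha
  set b := y - y0 with hb
  have hρ : 0 < a ^ 2 + b ^ 2 := by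
    rcases hxy' with h1 | h1
    · have : a ≠ 0 := sub_ne_zero.mpr h1
      positivity
    · have : b ≠ 0 := sub_ne_zero.mpr h1
      positivity
  set ρ2 := a ^ 2 + b ^ 2 with hρ2
  set R := Real.sqrt (ρ2 + h ^ 2) with hRdef
  have hRpos : 0 < R := Real.sqrt_pos.mpr (by nlinarith)
  set E := Complex.exp (I * k * R) with hE'
  set C := Complex.exp (I * k * h) with hC'
  have h1 : HasDerivAt (fun t : ℝ =>
      ((t : ℂ) - x0) *
        (Complex.exp (I * k * Real.sqrt ((t - x0) ^ 2 + b ^ 2 + h ^ 2)) - C)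
        / (4 * π * I * k * (((t - x0) ^ 2 + b ^ 2 : ℝ) : ℂ)))
      (((1 * (E - C) + ((x : ℂ) - x0) * (I * k * ((a : ℝ) / R) * E)) * (4 * π * I * k * (ρ2 : ℂ))
        - ((x : ℂ) - x0) * (E - C) * (4 * π * I * k * ((2 * a : ℝ) : ℂ)))
        / (4 * π * I * k * (ρ2 : ℂ)) ^ 2) x :=
    aux18 k h hk hh (fun t => (t - x0) ^ 2 + b ^ 2) (fun t => (t : ℂ) - x0)
      x a ρ2 1
      (by simpa using (((hasDerivAt_id x).sub_const x0).pow 2).add_const (b ^ 2))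
      (by simpa using (hasDerivAt_id x).ofReal_comp.sub_const (x0 : ℂ))
      rfl hρ
  have h2 : HasDerivAt (fun t : ℝ =>
      (-((t : ℂ) - y0)) *
        (Complex.exp (I * k * Real.sqrt (a ^ 2 + (t - y0) ^ 2 + h ^ 2)) - C)
        / (4 * π * I * k * ((a ^ 2 + (t - y0) ^ 2 : ℝ) : ℂ)))
      (((-1 * (E - C) + (-((y : ℂ) - y0)) * (I * k * ((b : ℝ) / R) * E)) * (4 * π * I * k * (ρ2 : ℂ))
        - (-((y : ℂ) - y0)) * (E - C) * (4 * π * I * k * ((2 * b : ℝ) : ℂ)))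
        / (4 * π * I * k * (ρ2 : ℂ)) ^ 2) y :=
    aux18 k h hk hh (fun t => a ^ 2 + (t - y0) ^ 2) (fun t => -((t : ℂ) - y0))
      y b ρ2 (-1)
      (by simpa using (((hasDerivAt_id y).sub_const y0).pow 2).const_add (a ^ 2))
      (by simpa [Pi.neg_def] using ((hasDerivAt_id y).ofReal_comp.sub_const (y0 : ℂ)).neg)
      rfl hρ
  rw [h1.deriv, h2.deriv]
  have hax : ((x : ℂ) - x0) = (a : ℂ) := by push_cast [ha]; ring
  have hby : ((y : ℂ) - y0) = (b : ℂ) := by push_cast [hb]; ring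
  have hab : ((a : ℂ)) ^ 2 + (b : ℂ) ^ 2 = (ρ2 : ℂ) := by push_cast [hρ2]; ring
  have hρc : (ρ2 : ℂ) ≠ 0 := Complex.ofReal_ne_zero.mpr (ne_of_gt hρ)
  have hRc : (R : ℂ) ≠ 0 := Complex.ofReal_ne_zero.mpr (ne_of_gt hRpos)
  have hπ : (π : ℂ) ≠ 0 := Complex.ofReal_ne_zero.mpr Real.pi_ne_zero
  have hkc : (k : ℂ) ≠ 0 := Complex.ofReal_ne_zero.mpr hk
  rw [hax, hby]
  clear_value a b ρ2 R E C
  field_simp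
  have hD : (R : ℂ) * (4 * π * I * k * (ρ2 : ℂ)) ^ 2 ≠ 0 := by
    apply mul_ne_zero hRc
    apply pow_ne_zero
    simp [hπ, hkc, hρc, I_ne_zero]
  push_cast
  linear_combination (E * I * k * (ρ2 : ℂ) - 2 * (E - C) * (R : ℂ)) * hab
end
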